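/- arXiv:2412.13148 — 2 statements merged into one kernel-verified Lean document; each statement's English description precedes it below -/
import Mathlib

section
/- Let H = diag(H₁, …, H_L) be block-diagonal with each H_l ∈ R^{m_l×m_l} symmetric positive definite, let W have blocks W_l with each H_l W_l of full row rank, and fix an initialization W⁰ with every entry of H_l W_l⁰ nonzero. For each l let λ_{l,1}(W⁰) ≥ λ_{l,m_l}(W⁰) > 0 be the largest and smallest eigenvalues of the preconditioned block diag(|H_l W_l⁰|)⁻¹ H_l, and let κ'_l(W⁰) = λ_{l,1}(W⁰)/λ_{l,m_l}(W⁰). Assume (i) for every l: ‖H_l W_l‖₁² − Tr(H_l)·Tr(W_lᵀ H_l W_l)·(2 λ_{l,m_l}(W⁰)/(λ_{l,1}(W⁰)+λ_{l,m_l}(W⁰))) > 0, and (ii) the overlap condition min_l ( ‖H_l W_l‖₁ + √(‖H_l W_l‖₁² − Tr(H_l)·Tr(W_lᵀ H_l W_l)·(2 λ_{l,m_l}(W⁰)/(λ_{l,1}(W⁰)+λ_{l,m_l}(W⁰)))) ) / Tr(H_l) > max_l ( ‖H_l W_l‖₁ − √(‖H_l W_l‖₁² − Tr(H_l)·Tr(W_lᵀ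 H_l W_l)·(2 λ_{l,m_l}(W⁰)/(λ_{l,1}(W⁰)+λ_{l,m_l}(W⁰)))) ) / Tr(H_l). Then there exists a single global step size η > 0 such that for every block l the whitened update W_l' = W_l − η (H_l W_l (H_l W_l)ᵀ)^{-1/2}(H_l W_l) satisfies (L_l(W_l') − L_l*)/(L_l(W_l) − L_l*) < 1 − 2/(κ'_l(W⁰)+1), where L_l(W_l) = (1/2)·Tr(W_lᵀ H_l W_l) and L_l* = 0. -/
open Matrix

open Classical in
/-- The unique positive semidefinite square root of a positive semidefinite matrix
(junk value `0` if `A` is not positive semidefinite). -/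
noncomputable def matSqrt {m : ℕ} (A : Matrix (Fin m) (Fin m) ℝ) : Matrix (Fin m) (Fin m) ℝ :=
  if h : A.PosSemidef then
    h.1.eigenvectorUnitary.1 * diagonal ((↑) ∘ (√·) ∘ h.1.eigenvalues) *
      (star h.1.eigenvectorUnitary : Matrix (Fin m) (Fin m) ℝ)
  else 0

/-- The GradWhitening operator `A ↦ (A Aᵀ)^{-1/2} A`. -/
noncomputable def whiten {m n : ℕ} (A : Matrix (Fin m) (Fin n) ℝ) : Matrix (Fin m) (Fin n) ℝ :=
  (matSqrt (A * Aᵀ))⁻¹ * A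

/-- The Schatten 1-norm (sum of singular values): `‖A‖₁ = Tr((A Aᵀ)^{1/2})`. -/
noncomputable def schattenOne {m n : ℕ} (A : Matrix (Fin m) (Fin n) ℝ) : ℝ :=
  (matSqrt (A * Aᵀ)).trace

/-- The quadratic loss `L(W) = (1/2) * Tr(Wᵀ H W)`. -/
noncomputable def loss {m n : ℕ} (H : Matrix (Fin m) (Fin m) ℝ)
    (W : Matrix (Fin m) (Fin n) ℝ) : ℝ :=
  (1 / 2) * (Wᵀ * H * W).trace

lemma matSqrt_spec {m : ℕ} {A : Matrix (Fin m) (Fin m) ℝ} (hA : A.PosSemidef) :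
    (matSqrt A).PosSemidef ∧ matSqrt A * matSqrt A = A := by
  have hUU : (star hA.1.eigenvectorUnitary : Matrix (Fin m) (Fin m) ℝ) *
      hA.1.eigenvectorUnitary.1 = 1 := Unitary.coe_star_mul_self _
  have hD : (diagonal ((↑) ∘ (√·) ∘ hA.1.eigenvalues) : Matrix (Fin m) (Fin m) ℝ).PosSemidef :=
    PosSemidef.diagonal (fun i => Real.sqrt_nonneg _)
  have hDD : (diagonal ((↑) ∘ (√·) ∘ hA.1.eigenvalues) : Matrix (Fin m) (Fin m) ℝ) *
      diagonal ((↑) ∘ (√·) ∘ hA.1.eigenvalues) = diagonal (RCLike.ofReal ∘ hA.1.eigenvalues) := by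
    rw [diagonal_mul_diagonal]
    congr 1
    funext i
    simp [Real.mul_self_sqrt (hA.eigenvalues_nonneg i)]
  rw [matSqrt, dif_pos hA]
  constructor
  · have := hD.mul_mul_conjTranspose_same (hA.1.eigenvectorUnitary.1)
    simpa [star_eq_conjTranspose] using this
  · conv_rhs => rw [hA.1.spectral_theorem, Unitary.conjStarAlgAut_apply]
    rw [← hDD]
    simp only [Matrix.mul_assoc]
    rw [← Matrix.mul_assoc _ _ (diagonal _ * _), hUU, Matrix.one_mul]

/-- A matrix of full row rank times its transpose is positive definite. -/
lemma aux_posDef {m n : ℕ} (A : Matrix (Fin m) (Fin n) ℝ)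
    (hr : A.rank = m) : (A * Aᵀ).PosDef := by
  refine Matrix.PosDef.of_dotProduct_mulVec_pos ?_ ?_
  · have := Matrix.isHermitian_mul_conjTranspose_self A
    rwa [Matrix.conjTranspose_eq_transpose_of_trivial] at this
  · intro x hx
    have hker : LinearMap.ker (Aᵀ.mulVecLin) = ⊥ := by
      have h1 := LinearMap.finrank_range_add_finrank_ker (Aᵀ.mulVecLin)
      have h2 : Aᵀ.rank = m := by rw [Matrix.rank_transpose, hr]
      rw [Matrix.rank] at h2
      rw [h2, Module.finrank_fin_fun] at h1
      exact Submodule.finrank_eq_zero.mp (by omega)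
    have hy : Aᵀ *ᵥ x ≠ 0 := by
      intro h
      have := LinearMap.ker_eq_bot.mp hker
      exact hx (this (show Aᵀ.mulVecLin x = Aᵀ.mulVecLin 0 by
        simpa [Matrix.mulVec_transpose] using h))
    have : star x ⬝ᵥ (A * Aᵀ) *ᵥ x = (Aᵀ *ᵥ x) ⬝ᵥ (Aᵀ *ᵥ x) := by
      rw [star_trivial, ← Matrix.mulVec_mulVec, Matrix.dotProduct_mulVec,
        ← Matrix.mulVec_transpose]
    rw [this]
    have h0 : (Aᵀ *ᵥ x) ⬝ᵥ (Aᵀ *ᵥ x) ≠ 0 := fun h => hy (dotProduct_self_eq_zero.mp h)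
    have h1 : 0 ≤ (Aᵀ *ᵥ x) ⬝ᵥ (Aᵀ *ᵥ x) := Finset.sum_nonneg fun i _ => mul_self_nonneg _
    exact lt_of_le_of_ne h1 (Ne.symm h0)

/-- Exact expansion of the loss after one whitened step. -/
lemma key_loss {m n : ℕ} (H : Matrix (Fin m) (Fin m) ℝ) (hH : H.PosDef)
    (W : Matrix (Fin m) (Fin n) ℝ) (hr : (H * W).rank = m) (η : ℝ) :
    loss H (W - η • whiten (H * W)) =
      loss H W - η * schattenOne (H * W) + η ^ 2 * (1 / 2) * H.trace := by
  set A := H * W with hA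
  have hP : (A * Aᵀ).PosDef := aux_posDef A hr
  have hPS : (A * Aᵀ).PosSemidef := hP.posSemidef
  have hms : matSqrt (A * Aᵀ) = matSqrt (A * Aᵀ) := rfl
  set S := matSqrt (A * Aᵀ) with hSdef
  have hSps : S.PosSemidef := (matSqrt_spec hPS).1
  have hSS : S * S = A * Aᵀ := (matSqrt_spec hPS).2
  have hSsymm : Sᵀ = S := by
    rw [← Matrix.conjTranspose_eq_transpose_of_trivial]; exact hSps.isHermitian
  have hdet : IsUnit S.det := by
    have hdp : 0 < (A * Aᵀ).det := hP.det_pos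
    rw [← hSS, Matrix.det_mul] at hdp
    exact isUnit_iff_ne_zero.mpr (fun h => by rw [h] at hdp; simp at hdp)
  have hinv1 : S⁻¹ * S = 1 := Matrix.nonsing_inv_mul S hdet
  have hinv2 : S * S⁻¹ = 1 := Matrix.mul_nonsing_inv S hdet
  have hHsymm : Hᵀ = H := by
    rw [← Matrix.conjTranspose_eq_transpose_of_trivial]; exact hH.isHermitian
  have hWtH : Wᵀ * H = Aᵀ := by rw [hA, Matrix.transpose_mul, hHsymm]
  set U := whiten A with hU
  have hUdef : U = S⁻¹ * A := by rw [hU, whiten, hms]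
  have hUt : Uᵀ = Aᵀ * S⁻¹ := by
    rw [hUdef, Matrix.transpose_mul, Matrix.transpose_nonsing_inv, hSsymm]
  have hUAt : U * Aᵀ = S := by
    rw [hUdef, Matrix.mul_assoc, ← hSS, ← Matrix.mul_assoc, hinv1, Matrix.one_mul]
  have hUUt : U * Uᵀ = 1 := by
    rw [hUt, ← Matrix.mul_assoc, hUAt, hinv2]
  have T1 : (Wᵀ * H * U).trace = S.trace := by
    rw [hWtH, Matrix.trace_mul_comm, hUAt]
  have T2 : (Uᵀ * H * W).trace = S.trace := by
    have e2 : Uᵀ * H * W = Aᵀ * U := by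
      rw [hUt, hUdef, Matrix.mul_assoc, Matrix.mul_assoc, ← hA]
    rw [e2, Matrix.trace_mul_comm, hUAt]
  have T3 : (Uᵀ * H * U).trace = H.trace := by
    rw [Matrix.trace_mul_comm, ← Matrix.mul_assoc, hUUt, Matrix.one_mul]
  have expand : (W - η • U)ᵀ * H * (W - η • U)
      = Wᵀ * H * W - η • (Wᵀ * H * U) - η • (Uᵀ * H * W) + (η * η) • (Uᵀ * H * U) := by
    simp only [Matrix.transpose_sub, Matrix.transpose_smul, Matrix.sub_mul, Matrix.mul_sub,
      Matrix.smul_mul, Matrix.mul_smul, smul_smul]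
    module
  have hsch : schattenOne A = S.trace := by rw [schattenOne, hms]
  rw [loss, expand]
  simp only [Matrix.trace_sub, Matrix.trace_add, Matrix.trace_smul, T1, T2, T3, smul_eq_mul]
  rw [loss, hsch]
  ring

lemma diag_entry_pos {m : ℕ} {H : Matrix (Fin m) (Fin m) ℝ} (hH : H.PosDef) (i : Fin m) :
    0 < H i i := by
  have hne : (Pi.single i (1:ℝ) : Fin m → ℝ) ≠ 0 := by
    intro h
    have := congr_fun h i
    simp at this
  have := hH.dotProduct_mulVec_pos hne
  rw [star_trivial] at this
  have heq : (Pi.single i (1:ℝ) : Fin m → ℝ) ⬝ᵥ H *ᵥ Pi.single i 1 = H i i := by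
    simp [dotProduct, Matrix.mulVec, Pi.single_apply, Finset.sum_ite_eq,
      Finset.mul_sum]
  rwa [heq] at this

lemma trace_pos_of_posDef {m : ℕ} {H : Matrix (Fin m) (Fin m) ℝ} (hH : H.PosDef)
    (hm : 0 < m) : 0 < H.trace := by
  have : Nonempty (Fin m) := ⟨⟨0, hm⟩⟩
  exact Finset.sum_pos (fun i _ => diag_entry_pos hH i) Finset.univ_nonempty

lemma trace_nonneg_of_posSemidef {m : ℕ} {S : Matrix (Fin m) (Fin m) ℝ}
    (hS : S.PosSemidef) : 0 ≤ S.trace := by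
  refine Finset.sum_nonneg fun i _ => ?_
  have := hS.dotProduct_mulVec_nonneg (Pi.single i 1)
  rw [star_trivial] at this
  have heq : (Pi.single i (1:ℝ) : Fin m → ℝ) ⬝ᵥ S *ᵥ Pi.single i 1 = S i i := by
    simp [dotProduct, Matrix.mulVec, Pi.single_apply, Finset.sum_ite_eq,
      Finset.mul_sum]
  rwa [heq] at this

lemma trace_conj_pos {m n : ℕ} {H : Matrix (Fin m) (Fin m) ℝ} (hH : H.PosDef)
    {W : Matrix (Fin m) (Fin n) ℝ} (hW : W ≠ 0) : 0 < (Wᵀ * H * W).trace := by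
  have diag_eq : ∀ j, (Wᵀ * H * W) j j = (fun i => W i j) ⬝ᵥ H *ᵥ (fun i => W i j) := by
    intro j
    simp only [Matrix.mul_apply, Matrix.transpose_apply, dotProduct, Matrix.mulVec,
      Finset.sum_mul, Finset.mul_sum]
    rw [Finset.sum_comm]
    exact Finset.sum_congr rfl fun k _ => Finset.sum_congr rfl fun i _ => by ring
  obtain ⟨i0, j0, hij⟩ : ∃ i j, W i j ≠ 0 := by
    by_contra hc
    push_neg at hc
    exact hW (by ext i j; simp [hc])
  refine Finset.sum_pos' (fun j _ => ?_) ⟨j0, Finset.mem_univ j0, ?_⟩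
  · rw [Matrix.diag_apply, diag_eq j]
    have := hH.posSemidef.dotProduct_mulVec_nonneg (fun i => W i j)
    rwa [star_trivial] at this
  · rw [Matrix.diag_apply, diag_eq j0]
    have hcol : (fun i => W i j0) ≠ 0 := fun h => hij (congr_fun h i0)
    have := hH.dotProduct_mulVec_pos hcol
    rwa [star_trivial] at this

lemma schattenOne_nonneg {m n : ℕ} (A : Matrix (Fin m) (Fin n) ℝ) : 0 ≤ schattenOne A := by
  have hPS : (A * Aᵀ).PosSemidef := by
    have := Matrix.posSemidef_self_mul_conjTranspose A
    rwa [Matrix.conjTranspose_eq_transpose_of_trivial] at this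
  rw [schattenOne]
  exact trace_nonneg_of_posSemidef (matSqrt_spec hPS).1

/-- Block-diagonal case, comparison with Adam's groupwise-preconditioned rates: under the
per-block existence-of-roots condition and the overlap condition, a single global step size
`η` makes the whitened update on every block `l` contract strictly faster than
`1 − 2/(κ'_l(W⁰)+1)`, where `κ'_l(W⁰)` is the condition number of the preconditioned block
`diag(|H_l W_l⁰|)⁻¹ H_l`. -/
theorem whitened_single_lr_beats_adam_group_lr {ι : Type*} [Fintype ι] [Nonempty ι]
    (md nd : ι → ℕ)
    (H : ∀ l, Matrix (Fin (md l)) (Fin (md l)) ℝ) (hH : ∀ l, (H l).PosDef)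
    (W : ∀ l, Matrix (Fin (md l)) (Fin (nd l)) ℝ)
    (hrank : ∀ l, (H l * W l).rank = md l)
    (W0 : ∀ l, Fin (md l) → ℝ)
    (hnz : ∀ l i, (H l).mulVec (W0 l) i ≠ 0)
    (lam1 lamm : ι → ℝ)
    (hpos : ∀ l, 0 < lamm l) (hle : ∀ l, lamm l ≤ lam1 l)
    (hlam1_eig : ∀ l, Module.End.HasEigenvalue
      (Matrix.mulVecLin ((Matrix.diagonal fun i => |(H l).mulVec (W0 l) i|)⁻¹ * H l)) (lam1 l))
    (hlamm_eig : ∀ l, Module.End.HasEigenvalue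
      (Matrix.mulVecLin ((Matrix.diagonal fun i => |(H l).mulVec (W0 l) i|)⁻¹ * H l)) (lamm l))
    (heig_bounds : ∀ l (μ : ℝ), Module.End.HasEigenvalue
      (Matrix.mulVecLin ((Matrix.diagonal fun i => |(H l).mulVec (W0 l) i|)⁻¹ * H l)) μ →
        lamm l ≤ μ ∧ μ ≤ lam1 l)
    (hroots : ∀ l, 0 < schattenOne (H l * W l) ^ 2 -
        (H l).trace * ((W l)ᵀ * H l * W l).trace * (2 * lamm l / (lam1 l + lamm l)))
    (hoverlap :
      (Finset.univ.sup' Finset.univ_nonempty fun l =>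
        (schattenOne (H l * W l) -
          Real.sqrt (schattenOne (H l * W l) ^ 2 -
            (H l).trace * ((W l)ᵀ * H l * W l).trace *
              (2 * lamm l / (lam1 l + lamm l)))) / (H l).trace) <
      (Finset.univ.inf' Finset.univ_nonempty fun l =>
        (schattenOne (H l * W l) +
          Real.sqrt (schattenOne (H l * W l) ^ 2 -
            (H l).trace * ((W l)ᵀ * H l * W l).trace *
              (2 * lamm l / (lam1 l + lamm l)))) / (H l).trace)) :
    ∃ η : ℝ, 0 < η ∧ ∀ l,
      (loss (H l) (W l - η • whiten (H l * W l)) - 0) / (loss (H l) (W l) - 0) <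
        1 - 2 / (lam1 l / lamm l + 1) := by
  set Slo := (Finset.univ.sup' Finset.univ_nonempty fun l =>
      (schattenOne (H l * W l) -
        Real.sqrt (schattenOne (H l * W l) ^ 2 -
          (H l).trace * ((W l)ᵀ * H l * W l).trace *
            (2 * lamm l / (lam1 l + lamm l)))) / (H l).trace) with hSlo
  set Ihi := (Finset.univ.inf' Finset.univ_nonempty fun l =>
      (schattenOne (H l * W l) +
        Real.sqrt (schattenOne (H l * W l) ^ 2 -
          (H l).trace * ((W l)ᵀ * H l * W l).trace *
            (2 * lamm l / (lam1 l + lamm l)))) / (H l).trace) with hIhi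
  -- per-block positivity facts
  have hmd : ∀ l, 0 < md l := by
    intro l
    by_contra h0
    have hm0 : md l = 0 := by omega
    haveI : IsEmpty (Fin (md l)) := by rw [hm0]; infer_instance
    have ht : (H l).trace = 0 := by simp [Matrix.trace]
    have hs : schattenOne (H l * W l) = 0 := by
      rw [schattenOne]; simp [Matrix.trace]
    have hT : ((W l)ᵀ * H l * W l).trace = 0 := by
      simp [Matrix.trace, Matrix.diag_apply, Matrix.mul_apply]
    have := hroots l
    rw [ht, hs, hT] at this
    simp at this
  have hh : ∀ l, 0 < (H l).trace := fun l => trace_pos_of_posDef (hH l) (hmd l)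
  have hW : ∀ l, W l ≠ 0 := by
    intro l hWl
    have := hrank l
    rw [hWl, Matrix.mul_zero, Matrix.rank_zero] at this
    have := hmd l
    omega
  have hT : ∀ l, 0 < ((W l)ᵀ * H l * W l).trace := fun l => trace_conj_pos (hH l) (hW l)
  have hc : ∀ l, 0 < 2 * lamm l / (lam1 l + lamm l) := by
    intro l
    have h1 := hpos l; have h2 := hle l
    apply div_pos <;> linarith
  have hflnn : ∀ l, 0 ≤ (schattenOne (H l * W l) -
      Real.sqrt (schattenOne (H l * W l) ^ 2 -
        (H l).trace * ((W l)ᵀ * H l * W l).trace *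
          (2 * lamm l / (lam1 l + lamm l)))) / (H l).trace := by
    intro l
    have htnn := schattenOne_nonneg (H l * W l)
    have hDle : schattenOne (H l * W l) ^ 2 -
        (H l).trace * ((W l)ᵀ * H l * W l).trace * (2 * lamm l / (lam1 l + lamm l))
        ≤ schattenOne (H l * W l) ^ 2 := by
      nlinarith [mul_pos (mul_pos (hh l) (hT l)) (hc l)]
    have hs : Real.sqrt (schattenOne (H l * W l) ^ 2 -
        (H l).trace * ((W l)ᵀ * H l * W l).trace * (2 * lamm l / (lam1 l + lamm l)))
        ≤ schattenOne (H l * W l) := by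
      calc Real.sqrt _ ≤ Real.sqrt (schattenOne (H l * W l) ^ 2) := Real.sqrt_le_sqrt hDle
      _ = schattenOne (H l * W l) := by
          rw [Real.sqrt_sq htnn]
    exact div_nonneg (by linarith) (hh l).le
  refine ⟨(Slo + Ihi) / 2, ?_, ?_⟩
  · have h0 : (0:ℝ) ≤ Slo := by
      obtain ⟨l⟩ := ‹Nonempty ι›
      refine le_trans (hflnn l) ?_
      rw [hSlo]
      exact Finset.le_sup' (fun l =>
        (schattenOne (H l * W l) -
          Real.sqrt (schattenOne (H l * W l) ^ 2 -
            (H l).trace * ((W l)ᵀ * H l * W l).trace *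
              (2 * lamm l / (lam1 l + lamm l)))) / (H l).trace) (Finset.mem_univ l)
    linarith
  · intro l
    have hfl : (schattenOne (H l * W l) -
        Real.sqrt (schattenOne (H l * W l) ^ 2 -
          (H l).trace * ((W l)ᵀ * H l * W l).trace *
            (2 * lamm l / (lam1 l + lamm l)))) / (H l).trace ≤ Slo := by
      rw [hSlo]
      exact Finset.le_sup' (fun l =>
        (schattenOne (H l * W l) -
          Real.sqrt (schattenOne (H l * W l) ^ 2 -
            (H l).trace * ((W l)ᵀ * H l * W l).trace *
              (2 * lamm l / (lam1 l + lamm l)))) / (H l).trace) (Finset.mem_univ l)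
    have hgl : Ihi ≤ (schattenOne (H l * W l) +
        Real.sqrt (schattenOne (H l * W l) ^ 2 -
          (H l).trace * ((W l)ᵀ * H l * W l).trace *
            (2 * lamm l / (lam1 l + lamm l)))) / (H l).trace := by
      rw [hIhi]
      exact Finset.inf'_le (fun l =>
        (schattenOne (H l * W l) +
          Real.sqrt (schattenOne (H l * W l) ^ 2 -
            (H l).trace * ((W l)ᵀ * H l * W l).trace *
              (2 * lamm l / (lam1 l + lamm l)))) / (H l).trace) (Finset.mem_univ l)
    set η := (Slo + Ihi) / 2 with hη
    set t := schattenOne (H l * W l) with hts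
    set h := (H l).trace with hhs
    set T := ((W l)ᵀ * H l * W l).trace with hTs
    set c := 2 * lamm l / (lam1 l + lamm l) with hcs
    set s := Real.sqrt (t ^ 2 - h * T * c) with hss
    have h1 : t - s < η * h := by
      have hlt : (t - s) / h < η := by
        calc (t - s) / h ≤ Slo := hfl
        _ < η := by rw [hη]; linarith
      exact (div_lt_iff₀ (hh l)).mp hlt
    have h2 : η * h < t + s := by
      have hlt : η < (t + s) / h := by
        calc η < Ihi := by rw [hη]; linarith
        _ ≤ (t + s) / h := hgl
      exact (lt_div_iff₀ (hh l)).mp hlt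
    have hsq : s ^ 2 = t ^ 2 - h * T * c := Real.sq_sqrt (hroots l).le
    -- the quadratic is negative at η
    have hquad : η ^ 2 * h - 2 * η * t + c * T < 0 := by
      have hprod : 0 < (s - (η * h - t)) * (s + (η * h - t)) := by
        apply mul_pos <;> linarith
      have hhl := hh l
      nlinarith [hprod, hsq, hhl]
    -- rewrite the loss
    rw [key_loss (H l) (hH l) (W l) (hrank l) η, sub_zero, sub_zero]
    have hcr : 1 - 2 / (lam1 l / lamm l + 1) = 1 - c := by
      rw [hcs]
      have h1 := hpos l; have h2 := hle l
      have : lam1 l / lamm l + 1 = (lam1 l + lamm l) / lamm l := by field_simp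
      rw [this, div_div_eq_mul_div]
    rw [hcr]
    have hloss : loss (H l) (W l) = (1 / 2) * T := rfl
    rw [hloss]
    rw [div_lt_iff₀ (by linarith [hT l] : (0:ℝ) < (1/2) * T)]
    nlinarith [hquad, hT l]
end

section
/- Let H be an m×m real symmetric positive definite matrix, let m ≤ n, and let W ∈ R^{m×n} be such that G = H W has full row rank. Set P = (G Gᵀ)^{-1/2} G. Then for every η ∈ R the one-step improvement of the quadratic loss L(W) = (1/2)·Tr(Wᵀ H W) under the update W' = W − η P satisfies the exact identity L(W) − L(W') = η · ‖H W‖₁ − (η²/2) · Tr(H), where ‖·‖₁ is the Schatten 1-norm. -/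
open Matrix

/-- A positive semidefinite matrix of full rank is positive definite. -/
lemma posDef_of_posSemidef_rank {m : ℕ} {S : Matrix (Fin m) (Fin m) ℝ}
    (hS : S.PosSemidef) (hrank : S.rank = m) : S.PosDef := by
  have hsurj : Function.Surjective S.mulVecLin := by
    rw [← LinearMap.range_eq_top]
    apply Submodule.eq_top_of_finrank_eq
    rw [Module.finrank_pi]
    simpa [Matrix.rank] using hrank
  have hinj : Function.Injective S.mulVecLin :=
    (LinearMap.injective_iff_surjective).mpr hsurj
  refine posDef_iff_dotProduct_mulVec.mpr ⟨hS.1, fun x hx => ?_⟩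
  rcases (hS.dotProduct_mulVec_nonneg x).lt_or_eq with h | h
  · exact h
  · exfalso
    apply hx
    have h0 : S *ᵥ x = 0 := (hS.dotProduct_mulVec_zero_iff x).mp h.symm
    have : S.mulVecLin x = S.mulVecLin 0 := by simpa using h0
    exact hinj this

/-- Exact one-step improvement identity for the whitened update: for every step size `η`,
`L(W) − L(W − η P) = η ‖H W‖₁ − (η²/2) Tr(H)` where `P = (G Gᵀ)^{-1/2} G`, `G = H W`. -/
theorem whitened_step_improvement_identity {m n : ℕ} (hmn : m ≤ n)
    (H : Matrix (Fin m) (Fin m) ℝ) (hH : H.PosDef)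
    (W : Matrix (Fin m) (Fin n) ℝ) (hrank : (H * W).rank = m) (η : ℝ) :
    loss H W - loss H (W - η • whiten (H * W)) =
      η * schattenOne (H * W) - (η ^ 2 / 2) * H.trace := by
  set G := H * W with hGdef
  have hSsd : (G * Gᵀ).PosSemidef := by
    simpa [conjTranspose_eq_transpose_of_trivial] using
      posSemidef_self_mul_conjTranspose (R := ℝ) G
  have hrankS : (G * Gᵀ).rank = m := by
    rw [← conjTranspose_eq_transpose_of_trivial G, rank_self_mul_conjTranspose]
    exact hrank
  have hSpd : (G * Gᵀ).PosDef := posDef_of_posSemidef_rank hSsd hrankS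
  set R := matSqrt (G * Gᵀ) with hRdef
  have hmat : matSqrt (G * Gᵀ) = R := rfl
  have hRR : R * R = G * Gᵀ := by
    have hspec := hSsd.1.spectral_theorem
    rw [Unitary.conjStarAlgAut_apply] at hspec
    have hU : (star hSsd.1.eigenvectorUnitary : Matrix (Fin m) (Fin m) ℝ) * hSsd.1.eigenvectorUnitary.1 = 1 :=
      Unitary.coe_star_mul_self _
    rw [hRdef, matSqrt, dif_pos hSsd]
    conv_rhs => rw [hspec]
    have e : ∀ (U D S : Matrix (Fin m) (Fin m) ℝ), U * D * S * (U * D * S) = U * (D * (S * U) * D) * S := by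
      intro U D S; simp only [Matrix.mul_assoc]
    rw [e, hU, Matrix.mul_one, diagonal_mul_diagonal]
    congr 3
    funext i
    simp [Real.mul_self_sqrt (hSsd.eigenvalues_nonneg i)]
  have hRsd : R.IsHermitian := by
    rw [hRdef, matSqrt, dif_pos hSsd]
    simp [IsHermitian, Matrix.mul_assoc, star_eq_conjTranspose, conjTranspose_eq_transpose_of_trivial]
  have hRsymm : Rᵀ = R := by
    rw [← conjTranspose_eq_transpose_of_trivial]; exact hRsd
  have hRunit : IsUnit R.det := by
    have h1 : IsUnit (R * R).det := by
      rw [hRR]; exact (isUnit_iff_isUnit_det _).mp hSpd.isUnit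
    rw [det_mul] at h1
    exact isUnit_of_mul_isUnit_left h1
  have hinvR : R⁻¹ * R = 1 := nonsing_inv_mul R hRunit
  have hRinv : R * R⁻¹ = 1 := mul_nonsing_inv R hRunit
  have hRinvsymm : (R⁻¹)ᵀ = R⁻¹ := by
    rw [transpose_nonsing_inv, hRsymm]
  have hHsymm : Hᵀ = H := by
    rw [← conjTranspose_eq_transpose_of_trivial]; exact hH.1
  have hwhiten : whiten G = R⁻¹ * G := by rw [whiten, hmat]
  have hschat : schattenOne G = R.trace := by rw [schattenOne, hmat]
  have hPt : (R⁻¹ * G)ᵀ = Gᵀ * R⁻¹ := by rw [transpose_mul, hRinvsymm]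
  have hQ : R⁻¹ * (G * Gᵀ) * R⁻¹ = 1 := by
    calc R⁻¹ * (G * Gᵀ) * R⁻¹ = R⁻¹ * (R * R) * R⁻¹ := by rw [hRR]
      _ = (R⁻¹ * R) * (R * R⁻¹) := by simp [Matrix.mul_assoc]
      _ = 1 := by rw [hinvR, hRinv, one_mul]
  have key1 : (Gᵀ * (R⁻¹ * G)).trace = R.trace := by
    calc (Gᵀ * (R⁻¹ * G)).trace
        = ((R⁻¹ * G) * Gᵀ).trace := trace_mul_comm _ _
      _ = (R⁻¹ * (G * Gᵀ)).trace := by rw [Matrix.mul_assoc]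
      _ = (R⁻¹ * (R * R)).trace := by rw [hRR]
      _ = ((R⁻¹ * R) * R).trace := by rw [Matrix.mul_assoc]
      _ = R.trace := by rw [hinvR, Matrix.one_mul]
  have hAW : ((R⁻¹ * G)ᵀ * H * W).trace = R.trace := by
    have e : (R⁻¹ * G)ᵀ * H * W = Gᵀ * (R⁻¹ * G) := by
      rw [hPt, hGdef]; simp [Matrix.mul_assoc]
    rw [e, key1]
  have hC : (Wᵀ * H * (R⁻¹ * G)).trace = R.trace := by
    have e : (Wᵀ * H * (R⁻¹ * G))ᵀ = (R⁻¹ * G)ᵀ * H * W := by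
      simp [transpose_mul, hHsymm, hRinvsymm, Matrix.mul_assoc]
    rw [← trace_transpose (Wᵀ * H * (R⁻¹ * G)), e, hAW]
  have hB : ((R⁻¹ * G)ᵀ * H * (R⁻¹ * G)).trace = H.trace := by
    calc ((R⁻¹ * G)ᵀ * H * (R⁻¹ * G)).trace
        = ((Gᵀ * R⁻¹) * H * (R⁻¹ * G)).trace := by rw [hPt]
      _ = ((R⁻¹ * G) * ((Gᵀ * R⁻¹) * H)).trace := trace_mul_comm _ _
      _ = ((R⁻¹ * (G * Gᵀ) * R⁻¹) * H).trace := by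
          congr 1; simp [Matrix.mul_assoc]
      _ = (1 * H).trace := by rw [hQ]
      _ = H.trace := by rw [Matrix.one_mul]
  have hexp : ((W - η • (R⁻¹ * G))ᵀ * H * (W - η • (R⁻¹ * G))).trace =
      (Wᵀ * H * W).trace - η * ((R⁻¹ * G)ᵀ * H * W).trace
        - η * (Wᵀ * H * (R⁻¹ * G)).trace
        + η ^ 2 * ((R⁻¹ * G)ᵀ * H * (R⁻¹ * G)).trace := by
    simp only [transpose_sub, transpose_smul, Matrix.sub_mul, Matrix.mul_sub,
      Matrix.smul_mul, Matrix.mul_smul, trace_sub, trace_smul, smul_eq_mul, smul_smul]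
    ring
  rw [loss, loss, hwhiten, hschat, hexp, hAW, hC, hB]
  ring
end
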